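/- arXiv:1301.2050 — 2 statements merged into one kernel-verified Lean document; each statement's English description precedes it below -/
import Mathlib

section
/- Let Z be a T-valued random variable with law μ that is c-good for some c ∈ (0,1], i.e. μ(A) ≥ c·|A| for every measurable A ⊆ T (|·| the Haar/Lebesgue measure on the circle T = R/Z). Define the operator B_Z on L_p(T) by (B_Z f)(x) = E f(x ⊕ Z) = ∫ f(x ⊕ s) dμ(s). Then for every 1 ≤ p < ∞ and every f ∈ L_p(T) with ∫_T f = 0, one has ‖B_Z f‖_p ≤ (1 − c)·‖f‖_p. -/
open MeasureTheory ENNReal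

/-- Jensen's inequality for `ℝ≥0∞`-valued lower integrals over a probability measure. -/
theorem stmt0_jensen {α : Type*} [MeasurableSpace α] (ν : Measure α) [IsProbabilityMeasure ν]
    (r : ℝ) (hr : 1 ≤ r) (h : α → ℝ≥0∞) (hm : Measurable h) :
    (∫⁻ s, h s ∂ν) ^ r ≤ ∫⁻ s, (h s) ^ r ∂ν := by
  rcases eq_or_lt_of_le hr with hr1 | hr1
  · simp [← hr1]
  · have hconj := Real.HolderConjugate.conjExponent hr1
    have := ENNReal.lintegral_mul_le_Lp_mul_Lq ν hconj hm.aemeasurable aemeasurable_const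
      (g := fun _ => (1 : ℝ≥0∞))
    simp only [Pi.mul_apply, mul_one, ENNReal.one_rpow, lintegral_one, measure_univ,
      one_mul] at this
    calc (∫⁻ s, h s ∂ν) ^ r ≤ ((∫⁻ s, h s ^ r ∂ν) ^ (1 / r)) ^ r :=
          ENNReal.rpow_le_rpow this (by positivity)
      _ = ∫⁻ s, h s ^ r ∂ν := by
          rw [← ENNReal.rpow_mul, one_div, inv_mul_cancel₀ (by positivity), ENNReal.rpow_one]

/-- Key estimate: for a finite measure `σ` on the circle and a strongly measurable `g`,
the `σ`-average of translates of `g` has `L^p` norm at most `σ univ * ‖g‖_p`. -/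
theorem stmt0_main (σ : Measure UnitAddCircle) [IsFiniteMeasure σ]
    (p : ℝ≥0∞) (hp : 1 ≤ p) (hp' : p ≠ ⊤)
    (g : UnitAddCircle → ℝ) (hgm : StronglyMeasurable g) :
    eLpNorm (fun x => ∫ s, g (x + s) ∂σ) p volume
      ≤ σ Set.univ * eLpNorm g p volume := by
  set k : ℝ≥0∞ := σ Set.univ with hk
  have hp0 : p ≠ 0 := (lt_of_lt_of_le zero_lt_one hp).ne'
  set r : ℝ := p.toReal with hrdef
  have hr1 : 1 ≤ r := by
    have := ENNReal.toReal_mono hp' hp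
    simpa using this
  have hr0 : 0 < r := lt_of_lt_of_le zero_lt_one hr1
  by_cases hk0 : k = 0
  · have hσ0 : σ = 0 := Measure.measure_univ_eq_zero.mp hk0
    simp [hσ0, hk0, ← hk, eLpNorm_zero]
  · have hktop : k ≠ ⊤ := (measure_lt_top σ _).ne
    set ν : Measure UnitAddCircle := k⁻¹ • σ with hν
    haveI : IsProbabilityMeasure ν := by
      constructor
      rw [hν, Measure.smul_apply, smul_eq_mul, ← hk, ENNReal.inv_mul_cancel hk0 hktop]
    have hσν : σ = k • ν := by
      rw [hν, smul_smul, ENNReal.mul_inv_cancel hk0 hktop, one_smul]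
    -- joint measurability
    have hadd : Measurable fun q : UnitAddCircle × UnitAddCircle => q.1 + q.2 := measurable_add
    have hgu : Measurable fun q : UnitAddCircle × UnitAddCircle => (‖g (q.1 + q.2)‖₊ : ℝ≥0∞) :=
      (hgm.measurable.comp hadd).enorm
    have hgur : Measurable fun q : UnitAddCircle × UnitAddCircle =>
        (‖g (q.1 + q.2)‖₊ : ℝ≥0∞) ^ r := hgu.pow_const r
    have hswap : ∫⁻ x, ∫⁻ s, (‖g (x + s)‖₊ : ℝ≥0∞) ^ r ∂ν ∂volume
        = ∫⁻ x, (‖g x‖₊ : ℝ≥0∞) ^ r ∂volume := by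
      rw [lintegral_lintegral_swap hgur.aemeasurable]
      have : ∀ s : UnitAddCircle, ∫⁻ x, (‖g (x + s)‖₊ : ℝ≥0∞) ^ r ∂volume
          = ∫⁻ x, (‖g x‖₊ : ℝ≥0∞) ^ r ∂volume := fun s =>
        lintegral_add_right_eq_self (fun x => (‖g x‖₊ : ℝ≥0∞) ^ r) s
      simp_rw [this]
      simp
    rw [eLpNorm_eq_lintegral_rpow_enorm_toReal hp0 hp', eLpNorm_eq_lintegral_rpow_enorm_toReal hp0 hp']
    rw [← hrdef]
    calc (∫⁻ x, (‖∫ s, g (x + s) ∂σ‖₊ : ℝ≥0∞) ^ r ∂volume) ^ (1 / r)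
        ≤ (∫⁻ x, (k * ∫⁻ s, (‖g (x + s)‖₊ : ℝ≥0∞) ∂ν) ^ r ∂volume) ^ (1 / r) := by
          refine ENNReal.rpow_le_rpow (lintegral_mono fun x => ?_) (by positivity)
          refine ENNReal.rpow_le_rpow ?_ hr0.le
          calc (‖∫ s, g (x + s) ∂σ‖₊ : ℝ≥0∞) ≤ ∫⁻ s, (‖g (x + s)‖₊ : ℝ≥0∞) ∂σ :=
                enorm_integral_le_lintegral_enorm _
            _ = k * ∫⁻ s, (‖g (x + s)‖₊ : ℝ≥0∞) ∂ν := by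
                rw [hσν, lintegral_smul_measure, smul_eq_mul]
      _ ≤ (∫⁻ x, k ^ r * ∫⁻ s, (‖g (x + s)‖₊ : ℝ≥0∞) ^ r ∂ν ∂volume) ^ (1 / r) := by
          refine ENNReal.rpow_le_rpow (lintegral_mono fun x => ?_) (by positivity)
          rw [ENNReal.mul_rpow_of_nonneg _ _ hr0.le]
          exact mul_le_mul_right (stmt0_jensen ν r hr1 _
            ((hgm.measurable.comp (measurable_const_add x)).enorm)) _
      _ = (k ^ r * ∫⁻ x, (‖g x‖₊ : ℝ≥0∞) ^ r ∂volume) ^ (1 / r) := by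
          rw [lintegral_const_mul _ (by
            exact hgur.lintegral_prod_right'), hswap]
      _ = k * (∫⁻ x, (‖g x‖₊ : ℝ≥0∞) ^ r ∂volume) ^ (1 / r) := by
          rw [ENNReal.mul_rpow_of_nonneg _ _ (by positivity), ← ENNReal.rpow_mul,
            mul_one_div, div_self hr0.ne', ENNReal.rpow_one]

/-- A `c`-good probability measure `μ` on the torus: convolution with `μ` contracts
mean-zero `L_p` functions by a factor `1 - c`. -/
theorem stmt0
    (μ : Measure UnitAddCircle) [IsProbabilityMeasure μ]
    (c : ℝ) (hc : c ∈ Set.Ioc (0 : ℝ) 1)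
    (hgood : ∀ A : Set UnitAddCircle, MeasurableSet A →
      ENNReal.ofReal c * volume A ≤ μ A)
    (p : ℝ≥0∞) (hp : 1 ≤ p) (hp' : p ≠ ⊤)
    (f : UnitAddCircle → ℝ) (hf : MemLp f p volume)
    (hmean : ∫ x, f x = 0) :
    eLpNorm (fun x => ∫ s, f (x + s) ∂μ) p volume
      ≤ ENNReal.ofReal (1 - c) * eLpNorm f p volume := by
  obtain ⟨hc0, hc1⟩ := hc
  have hp0 : p ≠ 0 := (lt_of_lt_of_le zero_lt_one hp).ne'
  -- measurable representative
  set g : UnitAddCircle → ℝ := hf.aestronglyMeasurable.mk f with hgdef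
  have hgm : StronglyMeasurable g := hf.aestronglyMeasurable.stronglyMeasurable_mk
  have hfg : f =ᵐ[volume] g := hf.aestronglyMeasurable.ae_eq_mk
  have hg_mem : MemLp g p volume := hf.ae_eq hfg
  -- g is integrable
  have hg_int : Integrable g volume := by
    refine memLp_one_iff_integrable.mp (hg_mem.mono_exponent hp)
  -- the "bad" null set where f and g differ
  set N : Set UnitAddCircle := toMeasurable volume {x | f x ≠ g x} with hNdef
  have hNm : MeasurableSet N := measurableSet_toMeasurable _ _
  have hN0 : volume N = 0 := by
    rw [hNdef, measure_toMeasurable]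
    exact ae_iff.mp hfg
  -- measure decomposition μ = σ + c • volume
  set ν₀ : Measure UnitAddCircle := (ENNReal.ofReal c) • volume with hν₀
  haveI : IsFiniteMeasure ν₀ := by
    constructor
    rw [hν₀, Measure.smul_apply, smul_eq_mul, UnitAddCircle.measure_univ, mul_one]
    exact ENNReal.ofReal_lt_top
  have hle : ν₀ ≤ μ := by
    refine Measure.le_iff.mpr fun A hA => ?_
    rw [hν₀, Measure.smul_apply, smul_eq_mul]
    exact hgood A hA
  set σ : Measure UnitAddCircle := μ - ν₀ with hσ
  have hσle : σ ≤ μ := Measure.sub_le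
  have hdecomp : σ + ν₀ = μ := Measure.sub_add_cancel_of_le hle
  haveI : IsFiniteMeasure σ := by
    constructor
    calc σ Set.univ ≤ μ Set.univ := hσle _
      _ < ⊤ := measure_lt_top μ _
  have hσuniv : σ Set.univ = ENNReal.ofReal (1 - c) := by
    rw [hσ, Measure.sub_apply MeasurableSet.univ hle, measure_univ, hν₀, Measure.smul_apply,
      smul_eq_mul, UnitAddCircle.measure_univ, mul_one,
      ENNReal.ofReal_sub 1 hc0.le, ENNReal.ofReal_one]
  -- a.e. x, the translate of g is μ-integrable
  have hadd : Measurable fun q : UnitAddCircle × UnitAddCircle => q.1 + q.2 := measurable_add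
  have hgu : Measurable fun q : UnitAddCircle × UnitAddCircle => (‖g (q.1 + q.2)‖₊ : ℝ≥0∞) :=
    (hgm.measurable.comp hadd).enorm
  have hfin : ∀ᵐ x ∂(volume : Measure UnitAddCircle),
      ∫⁻ s, (‖g (x + s)‖₊ : ℝ≥0∞) ∂μ < ⊤ := by
    have htot : ∫⁻ x, ∫⁻ s, (‖g (x + s)‖₊ : ℝ≥0∞) ∂μ ∂volume
        = ∫⁻ x, (‖g x‖₊ : ℝ≥0∞) ∂volume := by
      rw [lintegral_lintegral_swap hgu.aemeasurable]
      have : ∀ s : UnitAddCircle, ∫⁻ x, (‖g (x + s)‖₊ : ℝ≥0∞) ∂volume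
          = ∫⁻ x, (‖g x‖₊ : ℝ≥0∞) ∂volume := fun s =>
        lintegral_add_right_eq_self (fun x => (‖g x‖₊ : ℝ≥0∞)) s
      simp_rw [this]
      simp
    refine ae_lt_top (hgu.lintegral_prod_right') ?_
    rw [htot]
    exact hg_int.2.ne
  -- a.e. x, μ-a.e. s avoids the bad set
  have hbad : ∀ᵐ x ∂(volume : Measure UnitAddCircle), ∀ᵐ s ∂μ, x + s ∉ N := by
    have hindm : Measurable fun q : UnitAddCircle × UnitAddCircle =>
        N.indicator (1 : UnitAddCircle → ℝ≥0∞) (q.1 + q.2) :=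
      (measurable_one.indicator hNm).comp hadd
    have htot : ∫⁻ x, ∫⁻ s, N.indicator (1 : UnitAddCircle → ℝ≥0∞) (x + s) ∂μ ∂volume = 0 := by
      rw [lintegral_lintegral_swap hindm.aemeasurable]
      have : ∀ s : UnitAddCircle,
          ∫⁻ x, N.indicator (1 : UnitAddCircle → ℝ≥0∞) (x + s) ∂volume = 0 := by
        intro s
        rw [lintegral_add_right_eq_self (N.indicator (1 : UnitAddCircle → ℝ≥0∞)) s,
          lintegral_indicator_one hNm, hN0]
      simp_rw [this]
      simp
    have h0 := (lintegral_eq_zero_iff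
      (μ := (volume : Measure UnitAddCircle)) (hindm.lintegral_prod_right' (ν := μ))).mp htot
    filter_upwards [h0] with x hx
    simp only [Pi.zero_apply] at hx
    have := (lintegral_eq_zero_iff
      ((measurable_one.indicator hNm).comp (measurable_const_add x))).mp hx
    filter_upwards [this] with s hs
    intro hmem
    simp only [Function.comp_apply, Set.indicator_of_mem hmem, Pi.one_apply] at hs
    exact one_ne_zero hs
  -- a.e. identity: the μ-average of f equals the σ-average of g
  have hae : (fun x => ∫ s, f (x + s) ∂μ) =ᵐ[volume] fun x => ∫ s, g (x + s) ∂σ := by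
    filter_upwards [hbad, hfin] with x hx hxfin
    have h1 : ∫ s, f (x + s) ∂μ = ∫ s, g (x + s) ∂μ := by
      refine integral_congr_ae ?_
      filter_upwards [hx] with s hs
      by_contra hne
      exact hs (subset_toMeasurable volume {x | f x ≠ g x} hne)
    have hintμ : Integrable (fun s => g (x + s)) μ :=
      ⟨(hgm.comp_measurable (measurable_const_add x)).aestronglyMeasurable, hxfin⟩
    have hintσ : Integrable (fun s => g (x + s)) σ := hintμ.mono_measure hσle
    have hintν₀ : Integrable (fun s => g (x + s)) ν₀ := hintμ.mono_measure hle
    have h2 : ∫ s, g (x + s) ∂μ = ∫ s, g (x + s) ∂σ + ∫ s, g (x + s) ∂ν₀ := by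
      rw [← hdecomp, integral_add_measure hintσ hintν₀]
    have h3 : ∫ s, g (x + s) ∂ν₀ = 0 := by
      rw [hν₀, integral_smul_measure]
      have : ∫ s, g (x + s) ∂(volume : Measure UnitAddCircle) = ∫ s, g s ∂volume :=
        integral_add_left_eq_self g x
      rw [this]
      have : ∫ s, g s ∂(volume : Measure UnitAddCircle) = ∫ s, f s ∂volume :=
        integral_congr_ae hfg.symm
      rw [this, hmean, smul_zero]
    rw [h1, h2, h3, add_zero]
  rw [eLpNorm_congr_ae hae, eLpNorm_congr_ae hfg, ← hσuniv]
  exact stmt0_main σ p hp hp' g hgm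
end

section
/- Let Y be a real random variable such that there exist n ∈ N, c > 0 with the property that X = (t·(Y_1 + ⋯ + Y_n)) mod 1 is c-good (i.e. P(X ∈ A) ≥ c·Leb(A) for all measurable A ⊆ T), where Y_1, …, Y_n are i.i.d. copies of Y. Then for the operator (A_t f)(x) = E f(x ⊕ tY) and every f ∈ L_p(T), 1 ≤ p < ∞, with ∫_T f = 0, one has ‖f − A_t f‖_p ≥ (c/n)·‖f‖_p. -/
open MeasureTheory ENNReal ProbabilityTheory Set

namespace Stmt6Aux

noncomputable section

local notation "𝕋" => UnitAddCircle

lemma lint_translate (g : 𝕋 → ℝ≥0∞) (hg : Measurable g) (a : 𝕋) :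
    ∫⁻ x, g (x + a) ∂volume = ∫⁻ x, g x ∂volume :=
  (measurePreserving_add_right volume a).lintegral_comp hg

lemma pow_lintegral_le (κ : Measure 𝕋) [IsFiniteMeasure κ] {r : ℝ} (hr : 1 ≤ r)
    (F : 𝕋 → ℝ≥0∞) (hF : Measurable F) :
    (∫⁻ a, F a ∂κ) ^ r ≤ κ Set.univ ^ (r - 1) * ∫⁻ a, F a ^ r ∂κ := by
  rcases eq_or_lt_of_le hr with h1 | h1
  · simp [← h1]
  · have hr0 : r ≠ 0 := by positivity
    have hpq : r.HolderConjugate (r / (r - 1)) := Real.HolderConjugate.conjExponent h1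
    have H := ENNReal.lintegral_mul_le_Lp_mul_Lq κ hpq hF.aemeasurable
      (aemeasurable_const (b := (1 : ℝ≥0∞)))
    simp only [Pi.mul_apply, mul_one, ENNReal.one_rpow, lintegral_const, one_mul] at H
    have H2 := ENNReal.rpow_le_rpow H (le_of_lt (lt_trans one_pos h1))
    calc (∫⁻ a, F a ∂κ) ^ r
        ≤ ((∫⁻ a, F a ^ r ∂κ) ^ (1 / r) * (κ Set.univ) ^ (1 / (r / (r - 1)))) ^ r := H2
      _ = κ Set.univ ^ (r - 1) * ∫⁻ a, F a ^ r ∂κ := by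
          rw [ENNReal.mul_rpow_of_nonneg _ _ (by positivity : (0:ℝ) ≤ r),
            ← ENNReal.rpow_mul, ← ENNReal.rpow_mul, one_div_mul_cancel hr0,
            ENNReal.rpow_one, mul_comm]
          congr 2
          field_simp

lemma integral_param_stronglyMeasurable {α : Type*} [MeasurableSpace α] (ρ : Measure α)
    [SFinite ρ] (ψ : α → 𝕋) (hψ : Measurable ψ) (g : 𝕋 → ℝ) (hg : Measurable g) :
    StronglyMeasurable (fun x : 𝕋 => ∫ a, g (x + ψ a) ∂ρ) :=
  (hg.comp (measurable_fst.add (hψ.comp measurable_snd))).stronglyMeasurable.integral_prod_right'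

lemma ae_integrable {α : Type*} [MeasurableSpace α] (ρ : Measure α) [IsFiniteMeasure ρ]
    (ψ : α → 𝕋) (hψ : Measurable ψ) (g : 𝕋 → ℝ) (hg : Measurable g)
    (hgi : Integrable g volume) :
    ∀ᵐ x ∂(volume : Measure 𝕋), Integrable (fun a => g (x + ψ a)) ρ := by
  have hm : Measurable fun q : 𝕋 × α => (‖g (q.1 + ψ q.2)‖₊ : ℝ≥0∞) :=
    (hg.comp (measurable_fst.add (hψ.comp measurable_snd))).enorm
  have hfin : ∫⁻ x, (∫⁻ a, (‖g (x + ψ a)‖₊ : ℝ≥0∞) ∂ρ) ∂volume < ⊤ := by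
    rw [lintegral_lintegral_swap hm.aemeasurable]
    have : ∀ a : α, ∫⁻ x, (‖g (x + ψ a)‖₊ : ℝ≥0∞) ∂volume
        = ∫⁻ x, (‖g x‖₊ : ℝ≥0∞) ∂volume := fun a => lint_translate _ hg.enorm (ψ a)
    simp only [this, lintegral_const]
    exact ENNReal.mul_lt_top hgi.2 (measure_lt_top ρ _)
  have hae := ae_lt_top (Measurable.lintegral_prod_right' hm) hfin.ne
  filter_upwards [hae] with x hx
  exact ⟨(hg.comp (measurable_const.add hψ)).aestronglyMeasurable, hx⟩

lemma conv_contract (κ : Measure 𝕋) [IsFiniteMeasure κ] {p : ℝ≥0∞} (hp : 1 ≤ p) (hp' : p ≠ ⊤)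
    (g : 𝕋 → ℝ) (hg : Measurable g) :
    eLpNorm (fun x => ∫ a, g (x + a) ∂κ) p volume ≤ κ Set.univ * eLpNorm g p volume := by
  have hp0 : p ≠ 0 := fun h => by simp [h] at hp
  set r := p.toReal with hrdef
  have hr1 : 1 ≤ r := by
    rw [hrdef, ← ENNReal.toReal_one]
    exact ENNReal.toReal_mono hp' hp
  have hr0 : r ≠ 0 := by positivity
  have hrnn : (0:ℝ) ≤ r := by positivity
  rw [eLpNorm_eq_lintegral_rpow_enorm_toReal hp0 hp', eLpNorm_eq_lintegral_rpow_enorm_toReal hp0 hp']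
  have key : ∫⁻ x, (‖∫ a, g (x + a) ∂κ‖₊ : ℝ≥0∞) ^ r ∂volume
      ≤ κ Set.univ ^ r * ∫⁻ x, (‖g x‖₊ : ℝ≥0∞) ^ r ∂volume := by
    have step1 : ∀ x : 𝕋, (‖∫ a, g (x + a) ∂κ‖₊ : ℝ≥0∞) ^ r
        ≤ κ Set.univ ^ (r - 1) * ∫⁻ a, (‖g (x + a)‖₊ : ℝ≥0∞) ^ r ∂κ := by
      intro x
      refine le_trans ?_
        (pow_lintegral_le κ hr1 _ (hg.comp (measurable_const.add measurable_id)).enorm)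
      exact ENNReal.rpow_le_rpow (enorm_integral_le_lintegral_enorm _) hrnn
    have hm2 : Measurable fun q : 𝕋 × 𝕋 => (‖g (q.1 + q.2)‖₊ : ℝ≥0∞) ^ r :=
      ((hg.comp (measurable_fst.add measurable_snd)).enorm).pow_const _
    calc ∫⁻ x, (‖∫ a, g (x + a) ∂κ‖₊ : ℝ≥0∞) ^ r ∂volume
        ≤ ∫⁻ x, κ Set.univ ^ (r - 1) * ∫⁻ a, (‖g (x + a)‖₊ : ℝ≥0∞) ^ r ∂κ ∂volume :=
          lintegral_mono step1
      _ = κ Set.univ ^ (r - 1) * ∫⁻ x, ∫⁻ a, (‖g (x + a)‖₊ : ℝ≥0∞) ^ r ∂κ ∂volume :=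
          lintegral_const_mul _ (Measurable.lintegral_prod_right' hm2)
      _ = κ Set.univ ^ (r - 1) * ∫⁻ a, ∫⁻ x, (‖g (x + a)‖₊ : ℝ≥0∞) ^ r ∂volume ∂κ := by
          rw [lintegral_lintegral_swap hm2.aemeasurable]
      _ = κ Set.univ ^ (r - 1) * (κ Set.univ * ∫⁻ x, (‖g x‖₊ : ℝ≥0∞) ^ r ∂volume) := by
          congr 1
          have : ∀ a : 𝕋, ∫⁻ x, (‖g (x + a)‖₊ : ℝ≥0∞) ^ r ∂volume
              = ∫⁻ x, (‖g x‖₊ : ℝ≥0∞) ^ r ∂volume :=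
            fun a => lint_translate _ (hg.enorm.pow_const _) a
          simp only [this, lintegral_const]
          rw [mul_comm]
      _ = κ Set.univ ^ r * ∫⁻ x, (‖g x‖₊ : ℝ≥0∞) ^ r ∂volume := by
          rw [← mul_assoc]
          congr 1
          have h2 : κ Set.univ ^ (r - 1) * κ Set.univ ^ (1:ℝ) = κ Set.univ ^ r := by
            rw [← ENNReal.rpow_add_of_nonneg _ _ (by linarith) zero_le_one, sub_add_cancel]
          rw [← h2, ENNReal.rpow_one]
  calc (∫⁻ x, (‖∫ a, g (x + a) ∂κ‖₊ : ℝ≥0∞) ^ r ∂volume) ^ (1 / r)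
      ≤ (κ Set.univ ^ r * ∫⁻ x, (‖g x‖₊ : ℝ≥0∞) ^ r ∂volume) ^ (1 / r) :=
        ENNReal.rpow_le_rpow key (by positivity)
    _ = κ Set.univ * (∫⁻ x, (‖g x‖₊ : ℝ≥0∞) ^ r ∂volume) ^ (1 / r) := by
        rw [ENNReal.mul_rpow_of_nonneg _ _ (by positivity : (0:ℝ) ≤ 1 / r),
          ← ENNReal.rpow_mul, mul_one_div_cancel hr0, ENNReal.rpow_one]

end
end Stmt6Aux

open Stmt6Aux

/-- If for some `n` the law of `(t(Y_1 + ⋯ + Y_n)) mod 1` is `c`-good, then the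
operator `(A_t f)(x) = E f(x ⊕ tY)` satisfies `‖f - A_t f‖_p ≥ (c/n) ‖f‖_p` on
mean-zero functions. -/
theorem stmt6
    {Ω : Type*} [MeasureSpace Ω] (P : Measure Ω) [IsProbabilityMeasure P]
    (Y : ℕ → Ω → ℝ) (hmeas : ∀ i, Measurable (Y i))
    (hindep : iIndepFun Y P)
    (hident : ∀ i, Measure.map (Y i) P = Measure.map (Y 0) P)
    (t : ℝ) (ht : 0 < t)
    (n : ℕ) (hn : 0 < n) (c : ℝ) (hc : 0 < c)
    (hgood : ∀ A : Set UnitAddCircle, MeasurableSet A →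
      ENNReal.ofReal c * volume A ≤
        P ((fun ω => ((t * ∑ i ∈ Finset.range n, Y i ω : ℝ) : UnitAddCircle)) ⁻¹' A))
    (p : ℝ≥0∞) (hp : 1 ≤ p) (hp' : p ≠ ⊤)
    (f : UnitAddCircle → ℝ) (hfm : Measurable f) (hf : MemLp f p volume)
    (hmean : ∫ x, f x = 0) :
    ENNReal.ofReal (c / n) * eLpNorm f p volume ≤
      eLpNorm (fun x => f x - ∫ ω, f (x + ((t * Y 0 ω : ℝ) : UnitAddCircle)) ∂P)
        p volume := by
  classical
  have hvol_univ : (volume : Measure UnitAddCircle) Set.univ = 1 := UnitAddCircle.measure_univ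
  haveI : IsProbabilityMeasure (volume : Measure UnitAddCircle) := ⟨hvol_univ⟩
  have hφm : Measurable (fun r : ℝ => ((t * r : ℝ) : UnitAddCircle)) :=
    AddCircle.measurable_mk'.comp (measurable_id.const_mul t)
  set φ : ℝ → UnitAddCircle := fun r => ((t * r : ℝ) : UnitAddCircle) with hφ
  set S : ℕ → Ω → ℝ := fun k ω => ∑ i ∈ Finset.range k, Y i ω with hS
  have hSm : ∀ k, Measurable (S k) := fun k => Finset.measurable_sum _ fun i _ => hmeas i
  set μ : ℕ → Measure UnitAddCircle := fun k => Measure.map (fun ω => φ (S k ω)) P with hμ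
  haveI hμP : ∀ k, IsProbabilityMeasure (μ k) := fun k =>
    Measure.isProbabilityMeasure_map ((hφm.comp (hSm k)).aemeasurable)
  set lam : Measure UnitAddCircle := Measure.map (fun ω => φ (Y 0 ω)) P with hlam
  haveI : IsProbabilityMeasure lam :=
    Measure.isProbabilityMeasure_map ((hφm.comp (hmeas 0)).aemeasurable)
  have hfi : Integrable f volume := hf.integrable hp
  set Af : UnitAddCircle → ℝ := fun x => ∫ ω, f (x + φ (Y 0 ω)) ∂P with hAfdef
  have hAfm : Measurable Af :=
    (integral_param_stronglyMeasurable P _ (hφm.comp (hmeas 0)) f hfm).measurable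
  have hAf_eq : ∀ x, Af x = ∫ a, f (x + a) ∂lam := fun x =>
    (integral_map (hφm.comp (hmeas 0)).aemeasurable
      ((hfm.comp (measurable_const.add measurable_id)).aestronglyMeasurable)).symm
  set G : ℕ → UnitAddCircle → ℝ := fun k x => ∫ a, f (x + a) ∂(μ k) with hG
  have hGm : ∀ k, Measurable (G k) := fun k =>
    (integral_param_stronglyMeasurable (μ k) id measurable_id f hfm).measurable
  set h : UnitAddCircle → ℝ := fun x => f x - Af x with hh
  have hhm : Measurable h := hfm.sub hAfm
  set D := eLpNorm h p volume with hD
  set N := eLpNorm f p volume with hN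
  -- the law of the (k+1)-fold sum is the convolution of that of the k-fold sum with lam
  have hμsucc : ∀ k, μ (k + 1)
      = Measure.map (fun q : UnitAddCircle × UnitAddCircle => q.1 + q.2) ((μ k).prod lam) := by
    intro k
    have hXm : Measurable (fun ω => φ (S k ω)) := hφm.comp (hSm k)
    have hZm : Measurable (fun ω => φ (Y k ω)) := hφm.comp (hmeas k)
    have hlam' : Measure.map (fun ω => φ (Y k ω)) P = lam := by
      calc Measure.map (fun ω => φ (Y k ω)) P
          = Measure.map φ (Measure.map (Y k) P) := (Measure.map_map hφm (hmeas k)).symm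
        _ = Measure.map φ (Measure.map (Y 0) P) := by rw [hident k]
        _ = lam := Measure.map_map hφm (hmeas 0)
    have hind : IndepFun (fun ω => φ (S k ω)) (fun ω => φ (Y k ω)) P := by
      have h1 : IndepFun (∑ i ∈ Finset.range k, Y i) (Y k) P :=
        hindep.indepFun_finsetSum_of_notMem hmeas (Finset.notMem_range_self (n := k))
      have h2 : IndepFun (S k) (Y k) P := by
        have : (∑ i ∈ Finset.range k, Y i) = S k := by
          funext ω; simp [hS, Finset.sum_apply]
        rwa [this] at h1
      exact h2.comp hφm hφm
    have hjoint : Measure.map (fun ω => (φ (S k ω), φ (Y k ω))) P = (μ k).prod lam := by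
      rw [← hlam']
      exact (indepFun_iff_map_prod_eq_prod_map_map hXm.aemeasurable hZm.aemeasurable).1 hind
    have hfun : (fun ω => φ (S (k+1) ω))
        = (fun q : UnitAddCircle × UnitAddCircle => q.1 + q.2)
          ∘ (fun ω => (φ (S k ω), φ (Y k ω))) := by
      funext ω
      simp only [Function.comp_apply, hS, hφ, Finset.sum_range_succ, mul_add, AddCircle.coe_add]
    calc μ (k + 1) = Measure.map (fun ω => φ (S (k+1) ω)) P := rfl
      _ = Measure.map ((fun q : UnitAddCircle × UnitAddCircle => q.1 + q.2)
            ∘ (fun ω => (φ (S k ω), φ (Y k ω)))) P := by rw [hfun]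
      _ = Measure.map (fun q : UnitAddCircle × UnitAddCircle => q.1 + q.2)
            (Measure.map (fun ω => (φ (S k ω), φ (Y k ω))) P) :=
          (Measure.map_map measurable_add (hXm.prodMk hZm)).symm
      _ = Measure.map (fun q : UnitAddCircle × UnitAddCircle => q.1 + q.2) ((μ k).prod lam) := by
          rw [hjoint]
  -- one-step identity
  have hstep : ∀ k, ∀ᵐ x ∂(volume : Measure UnitAddCircle),
      G k x - G (k+1) x = ∫ a, h (x + a) ∂(μ k) := by
    intro k
    have hint1 := ae_integrable (μ k) id measurable_id f hfm hfi
    have hint2 := ae_integrable ((μ k).prod lam)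
      (fun q => q.1 + q.2) measurable_add f hfm hfi
    filter_upwards [hint1, hint2] with x hx1 hx2
    have hx1' : Integrable (fun a => f (x + a)) (μ k) := hx1
    have hG1 : G (k+1) x = ∫ a, Af (x + a) ∂(μ k) := by
      have e1 : G (k+1) x = ∫ a, f (x + a) ∂(μ (k+1)) := rfl
      have hsm : AEStronglyMeasurable (fun a : UnitAddCircle => f (x + a))
          (Measure.map (fun q : UnitAddCircle × UnitAddCircle => q.1 + q.2) ((μ k).prod lam)) :=
        (hfm.comp (measurable_const.add measurable_id)).aestronglyMeasurable
      rw [e1, hμsucc k, integral_map measurable_add.aemeasurable hsm, integral_prod _ hx2]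
      refine integral_congr_ae (Filter.Eventually.of_forall fun a => ?_)
      show (∫ b, f (x + (a + b)) ∂lam) = Af (x + a)
      rw [hAf_eq (x + a)]
      simp only [← add_assoc]
    have hx2' : Integrable (fun a => Af (x + a)) (μ k) := by
      refine (hx2.integral_prod_left).congr (Filter.Eventually.of_forall fun a => ?_)
      show (∫ b, f (x + (a + b)) ∂lam) = Af (x + a)
      rw [hAf_eq (x + a)]
      simp only [← add_assoc]
    have e0 : G k x = ∫ a, f (x + a) ∂(μ k) := rfl
    rw [e0, hG1, ← integral_sub hx1' hx2']
  -- telescoping estimate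
  have hconv_meas : ∀ k, Measurable (fun x => ∫ a, h (x + a) ∂(μ k)) := fun k =>
    (integral_param_stronglyMeasurable (μ k) id measurable_id h hhm).measurable
  have htel : ∀ k, eLpNorm (fun x => f x - G k x) p volume ≤ (k : ℝ≥0∞) * D := by
    intro k
    induction k with
    | zero =>
      have hμ0 : μ 0 = Measure.dirac (0 : UnitAddCircle) := by
        have e : (fun ω => φ (S 0 ω)) = fun _ : Ω => (0 : UnitAddCircle) := by
          funext ω; simp [hS, hφ]
        calc μ 0 = Measure.map (fun ω => φ (S 0 ω)) P := rfl
          _ = Measure.map (fun _ : Ω => (0 : UnitAddCircle)) P := by rw [e]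
          _ = Measure.dirac (0 : UnitAddCircle) := by
              rw [Measure.map_const, measure_univ, one_smul]
      have hG0 : ∀ x, G 0 x = f x := by
        intro x
        have e0 : G 0 x = ∫ a, f (x + a) ∂(μ 0) := rfl
        have hsm0 : StronglyMeasurable (fun a : UnitAddCircle => f (x + a)) :=
          ((hfm.comp (measurable_const.add measurable_id)) :
            Measurable fun a : UnitAddCircle => f (x + a)).stronglyMeasurable
        rw [e0, hμ0, integral_dirac' _ _ hsm0, add_zero]
      have : (fun x => f x - G 0 x) = fun _ => (0:ℝ) := funext fun x => by rw [hG0 x, sub_self]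
      simp [this]
    | succ k ih =>
      have hae : (fun x => f x - G (k+1) x) =ᵐ[(volume : Measure UnitAddCircle)]
          fun x => (f x - G k x) + ∫ a, h (x + a) ∂(μ k) := by
        filter_upwards [hstep k] with x hx
        rw [← hx]; ring
      rw [eLpNorm_congr_ae hae]
      refine le_trans (eLpNorm_add_le ((hfm.sub (hGm k)).aestronglyMeasurable)
        (hconv_meas k).aestronglyMeasurable hp) ?_
      have hcontr := conv_contract (μ k) hp hp' h hhm
      rw [measure_univ, one_mul, ← hD] at hcontr
      calc eLpNorm (fun x => f x - G k x) p volume + eLpNorm (fun x => ∫ a, h (x + a) ∂(μ k)) p volume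
          ≤ (k : ℝ≥0∞) * D + D := add_le_add ih hcontr
        _ = ((k + 1 : ℕ) : ℝ≥0∞) * D := by push_cast; ring
  -- goodness of μ n
  set ce := ENNReal.ofReal c with hce
  have hcele : ce • (volume : Measure UnitAddCircle) ≤ μ n := by
    refine Measure.le_iff.2 fun s hs => ?_
    rw [Measure.smul_apply, smul_eq_mul]
    have e : μ n s = P ((fun ω => φ (S n ω)) ⁻¹' s) :=
      Measure.map_apply (hφm.comp (hSm n)) hs
    rw [e]
    exact hgood s hs
  haveI : IsFiniteMeasure (ce • (volume : Measure UnitAddCircle)) := by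
    constructor
    rw [Measure.smul_apply, smul_eq_mul, hvol_univ, mul_one]
    exact ofReal_lt_top
  set ν := μ n - ce • (volume : Measure UnitAddCircle) with hν
  have hsplit : ν + ce • (volume : Measure UnitAddCircle) = μ n :=
    Measure.sub_add_cancel_of_le hcele
  have hce1 : ce ≤ 1 := by
    have hg := hgood Set.univ MeasurableSet.univ
    have : P ((fun ω => ((t * ∑ i ∈ Finset.range n, Y i ω : ℝ) : UnitAddCircle)) ⁻¹' Set.univ) = 1 := by
      rw [Set.preimage_univ, measure_univ]
    rw [this, hvol_univ, mul_one] at hg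
    exact hg
  have hν_univ : ν Set.univ = 1 - ce := by
    rw [hν, Measure.sub_apply MeasurableSet.univ hcele, measure_univ,
      Measure.smul_apply, smul_eq_mul, hvol_univ, mul_one]
  have hGn : (G n) =ᵐ[(volume : Measure UnitAddCircle)] fun x => ∫ a, f (x + a) ∂ν := by
    have hint1 := ae_integrable ν id measurable_id f hfm hfi
    have hint2 := ae_integrable (ce • (volume : Measure UnitAddCircle)) id measurable_id f hfm hfi
    filter_upwards [hint1, hint2] with x hx1 hx2
    have hx1' : Integrable (fun a => f (x + a)) ν := hx1
    have hx2' : Integrable (fun a => f (x + a)) (ce • (volume : Measure UnitAddCircle)) := hx2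
    have e0 : G n x = ∫ a, f (x + a) ∂(ν + ce • (volume : Measure UnitAddCircle)) := by
      rw [hsplit]
    rw [e0, integral_add_measure hx1' hx2', integral_smul_measure]
    have : ∫ a, f (x + a) ∂(volume : Measure UnitAddCircle) = 0 := by
      rw [integral_add_left_eq_self f x, hmean]
    rw [this, smul_zero, add_zero]
  have hGn_norm : eLpNorm (G n) p volume ≤ (1 - ce) * N := by
    rw [eLpNorm_congr_ae hGn]
    have hcontr := conv_contract ν hp hp' f hfm
    rwa [hν_univ, ← hN] at hcontr
  -- assemble
  have hNfin : N ≠ ⊤ := hf.2.ne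
  have hmain : N ≤ (n : ℝ≥0∞) * D + (1 - ce) * N := by
    have hae : f =ᵐ[(volume : Measure UnitAddCircle)]
        fun x => (f x - G n x) + G n x := Filter.Eventually.of_forall fun x => by ring
    calc N = eLpNorm (fun x => (f x - G n x) + G n x) p volume := by
          rw [hN, eLpNorm_congr_ae hae]
      _ ≤ eLpNorm (fun x => f x - G n x) p volume + eLpNorm (G n) p volume :=
          eLpNorm_add_le ((hfm.sub (hGm n)).aestronglyMeasurable)
            (hGm n).aestronglyMeasurable hp
      _ ≤ (n : ℝ≥0∞) * D + (1 - ce) * N := add_le_add (htel n) hGn_norm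
  have hkey : ce * N ≤ (n : ℝ≥0∞) * D := by
    have hsum : ce * N + (1 - ce) * N = N := by
      rw [← add_mul, add_tsub_cancel_of_le hce1, one_mul]
    have hfin2 : (1 - ce) * N ≠ ⊤ :=
      ENNReal.mul_ne_top (ENNReal.sub_ne_top ENNReal.one_ne_top) hNfin
    have he : ce * N = N - (1 - ce) * N := ENNReal.eq_sub_of_add_eq hfin2 hsum
    rw [he]
    exact tsub_le_iff_right.2 hmain
  have hn0 : (n : ℝ≥0∞) ≠ 0 := Nat.cast_ne_zero.2 hn.ne'
  have hn_top : (n : ℝ≥0∞) ≠ ⊤ := natCast_ne_top n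
  have hcoef : ENNReal.ofReal (c / n) = ce / (n : ℝ≥0∞) := by
    rw [ENNReal.ofReal_div_of_pos (by exact_mod_cast hn), hce, ENNReal.ofReal_natCast]
  have hfinal : ENNReal.ofReal (c / n) * N ≤ D := by
    calc ENNReal.ofReal (c / n) * N = (ce * N) / (n : ℝ≥0∞) := by
          rw [hcoef, div_eq_mul_inv, div_eq_mul_inv]; ring
      _ ≤ ((n : ℝ≥0∞) * D) / (n : ℝ≥0∞) := by gcongr
      _ = D := by
          rw [mul_comm, mul_div_assoc, ENNReal.div_self hn0 hn_top, mul_one]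
  exact hfinal
end
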